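/- For v in the open unit ball of ℝⁿ, the Lorentz boost B(v), the (n+1)×(n+1) block matrix with blocks [[γ_v, γ_v vᵀ], [γ_v v, I_n + (γ_v²/(1+γ_v)) v vᵀ]], is symmetric positive definite. -/

import Mathlib

open scoped RealInnerProductSpace

noncomputable def gam {n : ℕ} (v : EuclideanSpace ℝ (Fin n)) : ℝ :=
  1 / Real.sqrt (1 - ‖v‖ ^ 2)

noncomputable def eAdd {n : ℕ} (u v : EuclideanSpace ℝ (Fin n)) :
    EuclideanSpace ℝ (Fin n) :=
  (1 / (1 + ⟪u, v⟫)) •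
    (u + (1 / gam u) • v + ((gam u / (1 + gam u)) * ⟪u, v⟫) • u)

noncomputable def boost {n : ℕ} (v : EuclideanSpace ℝ (Fin n)) :
    Matrix (Unit ⊕ Fin n) (Unit ⊕ Fin n) ℝ :=
  Matrix.fromBlocks
    (Matrix.of fun _ _ => gam v)
    (Matrix.of fun _ j => gam v * v j)
    (Matrix.of fun i _ => gam v * v i)
    (1 + Matrix.of fun i j => (gam v) ^ 2 / (1 + gam v) * v i * v j)

open Matrix
theorem boost_posDef {n : ℕ} (v : EuclideanSpace ℝ (Fin n)) (hv : ‖v‖ < 1) :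
    (boost v).IsSymm ∧ (boost v).PosDef := by
  have hnorm : 0 ≤ ‖v‖ := norm_nonneg v
  have h1 : 0 < 1 - ‖v‖ ^ 2 := by nlinarith
  have hsq : 0 < Real.sqrt (1 - ‖v‖ ^ 2) := Real.sqrt_pos.mpr h1
  have hsqle : Real.sqrt (1 - ‖v‖ ^ 2) ≤ 1 := Real.sqrt_le_one.mpr (by nlinarith)
  have hg1 : 1 ≤ gam v := by
    rw [gam, le_div_iff₀ hsq]; simpa using hsqle
  have hg0 : 0 < gam v := lt_of_lt_of_le one_pos hg1
  have hg1' : 0 < 1 + gam v := by linarith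
  have hsym : (boost v).IsSymm := by
    show Matrix.transpose (boost v) = boost v
    ext i j
    rcases i with i | i <;> rcases j with j | j <;>
      simp [boost, Matrix.transpose_apply, Matrix.fromBlocks, Matrix.one_apply,
        eq_comm] <;> ring
  refine ⟨hsym, Matrix.posDef_iff_dotProduct_mulVec.mpr ⟨?_, ?_⟩⟩
  · ext i j
    rw [Matrix.conjTranspose_apply, star_trivial]
    exact hsym.apply i j
  intro x hx
  set t := x (Sum.inl ()) with ht
  set s := ∑ i, v i * x (Sum.inr i) with hs
  set W := ∑ i, (x (Sum.inr i)) ^ 2 with hW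
  have hWnn : 0 ≤ W := Finset.sum_nonneg fun i _ => sq_nonneg _
  have hvsum : ∑ i, (v i) ^ 2 = ‖v‖ ^ 2 := by
    rw [EuclideanSpace.norm_eq, Real.sq_sqrt (Finset.sum_nonneg fun i _ => sq_nonneg _)]
    simp [sq]
  have hcs : s ^ 2 ≤ ‖v‖ ^ 2 * W := by
    calc s ^ 2 ≤ (∑ i, (v i) ^ 2) * (∑ i, (x (Sum.inr i)) ^ 2) :=
          Finset.sum_mul_sq_le_sq_mul_sq _ _ _
      _ = ‖v‖ ^ 2 * W := by rw [hvsum]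
  have hQ : star x ⬝ᵥ (boost v) *ᵥ x
      = gam v * t ^ 2 + 2 * gam v * t * s + W + gam v ^ 2 / (1 + gam v) * s ^ 2 := by
    simp only [dotProduct, Matrix.mulVec, Fintype.sum_sum_type, star,
      Finset.univ_unique, Finset.sum_singleton]
    simp only [boost, Matrix.fromBlocks, Matrix.of_apply, Sum.elim_inl, Sum.elim_inr,
      Matrix.add_apply, Matrix.one_apply, Pi.star_apply, star_trivial]
    have hinner : ∀ i : Fin n,
        (∑ j, ((if i = j then (1:ℝ) else 0) + gam v ^ 2 / (1 + gam v) * v i * v j)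
          * x (Sum.inr j))
        = x (Sum.inr i) + gam v ^ 2 / (1 + gam v) * v i * s := by
      intro i
      simp_rw [add_mul, ite_mul, one_mul, zero_mul]
      rw [Finset.sum_add_distrib, Finset.sum_ite_eq, if_pos (Finset.mem_univ i), hs,
        Finset.mul_sum]
      congr 1
      exact Finset.sum_congr rfl fun j _ => by ring
    simp_rw [hinner]
    have expand : ∀ i : Fin n, x (Sum.inr i) *
        (gam v * v i * x (Sum.inl ()) + (x (Sum.inr i) + gam v ^ 2 / (1 + gam v) * v i * s))
        = gam v * x (Sum.inl ()) * (v i * x (Sum.inr i)) + x (Sum.inr i) ^ 2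
          + (gam v ^ 2 / (1 + gam v) * s) * (v i * x (Sum.inr i)) := fun i => by ring
    have hgs : ∑ i, gam v * v i * x (Sum.inr i) = gam v * s := by
      rw [hs, Finset.mul_sum]
      exact Finset.sum_congr rfl fun i _ => by ring
    rw [show Sum.inl (default : Unit) = Sum.inl () from rfl,
      Finset.sum_congr rfl (fun i _ => expand i), Finset.sum_add_distrib,
      Finset.sum_add_distrib, ← Finset.mul_sum, ← Finset.mul_sum, ← hs, ← hW, hgs, ← ht]
    ring
  have key : gam v * t ^ 2 + 2 * gam v * t * s + W + gam v ^ 2 / (1 + gam v) * s ^ 2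
      = gam v * (t + s) ^ 2 + (W - gam v / (1 + gam v) * s ^ 2) := by
    field_simp
    ring
  rw [hQ, key]
  have hfrac : gam v / (1 + gam v) < 1 := by
    rw [div_lt_one hg1']; linarith
  have hfracnn : 0 ≤ gam v / (1 + gam v) := by positivity
  rcases eq_or_lt_of_le hWnn with hW0 | hWpos
  · -- W = 0 ⇒ all w_i = 0 ⇒ s = 0, t ≠ 0
    have hw : ∀ i, x (Sum.inr i) = 0 := by
      intro i
      have := (Finset.sum_eq_zero_iff_of_nonneg (fun i _ => sq_nonneg (x (Sum.inr i)))).mp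
        hW0.symm i (Finset.mem_univ i)
      exact pow_eq_zero_iff (by norm_num) |>.mp this
    have hs0 : s = 0 := by
      rw [hs]; exact Finset.sum_eq_zero fun i _ => by rw [hw i, mul_zero]
    have ht0 : t ≠ 0 := by
      intro h
      apply hx
      funext i
      rcases i with i | i
      · cases i; exact h
      · exact hw i
    rw [hs0, ← hW0]
    have ht2 : 0 < gam v * t ^ 2 := by positivity
    nlinarith
  · -- W > 0
    have h2 : gam v / (1 + gam v) * s ^ 2 < W := by
      calc gam v / (1 + gam v) * s ^ 2 ≤ gam v / (1 + gam v) * (‖v‖ ^ 2 * W) := by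
            apply mul_le_mul_of_nonneg_left hcs hfracnn
        _ ≤ 1 * (‖v‖ ^ 2 * W) := by
            apply mul_le_mul_of_nonneg_right hfrac.le (by positivity)
        _ < W := by nlinarith
    nlinarith [sq_nonneg (t + s), mul_nonneg hg0.le (sq_nonneg (t + s))]
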